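/- Let D be a squarefree positive integer with D ≠ 3. Suppose (t, r, q) parameterizes a complete family of pairing-friendly elliptic curves with embedding degree k = 6 and CM discriminant D such that r(x) = Φ_6(t(x) − 1) and deg q = deg r (i.e., ρ(t, r, q) = 1). Then every y ∈ ℚ[x] with D·y² = 4q − t² satisfies 2·deg y = deg t. -/

import Mathlib

open Polynomial

/-- `f ∈ ℚ[x]` represents integers: there is an integer `a` with `f(a) ∈ ℤ`. -/
def RepresentsIntegers (f : ℚ[X]) : Prop :=
  ∃ a n : ℤ, f.eval (a : ℚ) = (n : ℚ)

/-- `f ∈ ℚ[x]` represents primes: `f` is nonconstant, irreducible over `ℚ`,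
has positive leading coefficient, represents integers, and no prime number
divides every integer value `f(a)` with `a ∈ ℤ`, `f(a) ∈ ℤ`. -/
def RepresentsPrimes (f : ℚ[X]) : Prop :=
  0 < f.natDegree ∧ Irreducible f ∧ 0 < f.leadingCoeff ∧ RepresentsIntegers f ∧
    ∀ p : ℕ, p.Prime → ∃ a n : ℤ, f.eval (a : ℚ) = (n : ℚ) ∧ ¬ (p : ℤ) ∣ n

/-- `(t, r, q)` parameterizes a complete family of pairing-friendly elliptic curves
with embedding degree `k` and CM discriminant `D`:
(i) `r` represents primes; (ii) `q` represents primes; (iii) `r ∣ q + 1 - t`;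
(iv) `r ∣ Φ_k(t - 1)`; (v) `D·y² = 4q - t²` for some `y ∈ ℚ[x]`. -/
def IsCompleteFamily (k D : ℕ) (t r q : ℚ[X]) : Prop :=
  t ≠ 0 ∧ r ≠ 0 ∧ q ≠ 0 ∧
  RepresentsPrimes r ∧ RepresentsPrimes q ∧
  r ∣ (q + 1 - t) ∧
  r ∣ (cyclotomic k ℚ).comp (t - 1) ∧
  ∃ y : ℚ[X], (D : ℚ[X]) * y ^ 2 = 4 * q - t ^ 2

lemma cyclo6 : cyclotomic 6 ℚ = X^2 - X + 1 := by
  have h := cyclotomic_expand_eq_cyclotomic_mul (p := 2) (n := 3) Nat.prime_two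
    (by norm_num) (R := ℚ)
  rw [cyclotomic_three] at h
  have h2 : (expand ℚ 2) (X^2 + X + 1) = X^4 + X^2 + 1 := by
    simp [map_add, expand_X, map_pow]; ring
  rw [h2, show (X^4 + X^2 + 1 : ℚ[X]) = (X^2 - X + 1) * (X^2 + X + 1) by ring,
    show 3 * 2 = 6 from rfl] at h
  have hne : (X^2 + X + 1 : ℚ[X]) ≠ 0 := by
    intro hc
    have := congrArg (fun p => coeff p 2) hc
    simp [coeff_X, coeff_one] at this
  exact (mul_right_cancel₀ hne h.symm)

/-- The nondegenerate subcase: if `c₀ ∉ {0, 1/3, 1/4}` the master equation is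
impossible (the CM equation would factor into units over `ℂ`). -/
lemma no_middle_case (D : ℕ) (t y : ℚ[X]) (ht1 : 1 ≤ t.natDegree)
    (c₀ : ℚ) (hc0 : c₀ ≠ 0) (hc3 : c₀ ≠ 1/3) (hc4 : c₀ ≠ 1/4)
    (hmaster : (D : ℚ[X]) * y^2 = (4 * C c₀ - 1) * t^2 + (4 - 12 * C c₀) * t + (12 * C c₀ - 4)) :
    False := by
  have hkey : ((4 * C c₀ - 1) * t - (6 * C c₀ - 2))^2 - (4 * C c₀ - 1) * ((D : ℚ[X]) * y^2)
      = 4 * C c₀ * (1 - 3 * C c₀) := by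
    linear_combination (1 - 4 * C c₀) * hmaster
  -- move to ℂ
  set f := algebraMap ℚ ℂ with hf
  set T := t.map f with hT
  set Y := y.map f with hY
  set c' : ℂ := f c₀ with hc'
  have e2 : ((4 * C c' - 1) * T - (6 * C c' - 2))^2 - (4 * C c' - 1) * ((D : ℂ[X]) * Y^2)
      = 4 * C c' * (1 - 3 * C c') := by
    have := congrArg (map f) hkey
    simpa [Polynomial.map_sub, Polynomial.map_add, Polynomial.map_mul, Polynomial.map_pow,
      Polynomial.map_ofNat, Polynomial.map_one, Polynomial.map_natCast, map_C, hT, hY, hc'] using this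
  obtain ⟨s, hs⟩ := IsAlgClosed.exists_pow_nat_eq ((4 * c' - 1) * (D : ℂ)) (n := 2) (by norm_num)
  have hCs : (C s)^2 = (4 * C c' - 1) * ((D : ℕ) : ℂ[X]) := by
    rw [← C_pow, hs, C_mul, C_sub, C_mul]
    simp [C_eq_natCast, map_ofNat]
  set A := (4 * C c' - 1) * T - (6 * C c' - 2) with hA
  have hfac : (A - C s * Y) * (A + C s * Y) = C (4 * c' * (1 - 3 * c')) := by
    have hCk : C (4 * c' * (1 - 3 * c')) = 4 * C c' * (1 - 3 * C c') := by
      simp [C_mul, C_sub, map_ofNat]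
    rw [hCk]
    linear_combination e2 - Y^2 * hCs
  have hc'0 : c' ≠ 0 := by
    simpa [hc', hf] using hc0
  have hc'3 : (1 : ℂ) - 3 * c' ≠ 0 := by
    intro hcc
    apply hc3
    have : c' = 1/3 := by linear_combination -hcc/3
    rw [hc', hf, eq_ratCast, show (1/3 : ℂ) = ((1/3 : ℚ) : ℂ) by norm_num] at this
    exact Rat.cast_injective this
  have hkne : (4 * c' * (1 - 3 * c')) ≠ 0 := by
    apply mul_ne_zero (by simpa using hc'0) hc'3
  have hunit : IsUnit (C (4 * c' * (1 - 3 * c'))) := (isUnit_C).mpr hkne.isUnit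
  rw [← hfac] at hunit
  have h1 : (A - C s * Y).natDegree = 0 :=
    natDegree_eq_zero_of_isUnit (isUnit_of_mul_isUnit_left hunit)
  have h2 : (A + C s * Y).natDegree = 0 :=
    natDegree_eq_zero_of_isUnit (isUnit_of_mul_isUnit_right hunit)
  have hAdeg : A.natDegree = 0 := by
    have h2A : (2 : ℂ[X]) * A = (A - C s * Y) + (A + C s * Y) := by ring
    have : ((2 : ℂ[X]) * A).natDegree ≤ 0 := by
      rw [h2A]
      exact le_trans (natDegree_add_le _ _) (by omega)
    rwa [show ((2:ℂ[X])) = C (2:ℂ) from (map_ofNat C 2).symm, natDegree_C_mul (by norm_num),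
      Nat.le_zero] at this
  -- but A has degree = deg t ≥ 1
  have hc'4 : (4 : ℂ) * c' - 1 ≠ 0 := by
    intro hcc
    apply hc4
    have : c' = 1/4 := by linear_combination hcc/4
    rw [hc', hf, eq_ratCast, show (1/4 : ℂ) = ((1/4 : ℚ) : ℂ) by norm_num] at this
    exact Rat.cast_injective this
  have hTdeg : T.natDegree = t.natDegree := natDegree_map_eq_of_injective f.injective t
  have : A.natDegree = t.natDegree := by
    rw [hA, show (4 * C c' - 1) * T - (6 * C c' - 2) =
      C (4 * c' - 1) * T - C (6 * c' - 2) by simp [C_sub, C_mul, map_ofNat]]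
    rw [natDegree_sub_C, natDegree_C_mul hc'4, hTdeg]
  omega

/-- Lemma 3.1 for `k = 6`: in an ideal family with `r = Φ_6(t - 1)` and `D ≠ 3`,
any CM polynomial `y` satisfies `2 deg y = deg t`. -/
theorem deg_y_k6 (D : ℕ) (hD : Squarefree D) (hDpos : 0 < D) (hD3 : D ≠ 3)
    (t r q : ℚ[X]) (h : IsCompleteFamily 6 D t r q)
    (hr : r = (cyclotomic 6 ℚ).comp (t - 1))
    (hdeg : q.natDegree = r.natDegree) :
    ∀ y : ℚ[X], (D : ℚ[X]) * y ^ 2 = 4 * q - t ^ 2 → 2 * y.natDegree = t.natDegree := by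
  obtain ⟨htne, hrne, hqne, hrp, hqp, hdvd, -, -⟩ := h
  intro y hy
  have hrt : r = t^2 - 3*t + 3 := by
    rw [hr, cyclo6]
    simp only [sub_comp, add_comp, pow_comp, X_comp, one_comp]
    ring
  -- t is nonconstant
  have hbound : r.natDegree ≤ 2 * t.natDegree := by
    rw [hrt]
    apply le_trans (natDegree_add_le _ _)
    simp only [max_le_iff]
    constructor
    · apply le_trans (natDegree_sub_le _ _)
      simp only [max_le_iff]
      refine ⟨by simp [natDegree_pow], ?_⟩
      apply le_trans (natDegree_mul_le)
      simp [Nat.le_add_left]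
      omega
    · simp
  have hrp1 := hrp.1
  have ht1 : 1 ≤ t.natDegree := by omega
  -- deg r = 2 deg t
  have hrdeg : r.natDegree = 2 * t.natDegree := by
    rw [hrt, show (t^2 - 3*t + 3 : ℚ[X]) = t^2 - (3*t - 3) by ring]
    rw [natDegree_sub_eq_left_of_natDegree_lt, natDegree_pow]
    rw [natDegree_pow]
    have : (3*t - 3 : ℚ[X]).natDegree ≤ t.natDegree := by
      apply le_trans (natDegree_sub_le _ _)
      simp only [max_le_iff]
      constructor
      · apply le_trans natDegree_mul_le; simp
      · simp
    omega
  -- extract the constant c₀ with q = c₀ r + t - 1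
  obtain ⟨c₀, hq⟩ : ∃ c₀ : ℚ, q = C c₀ * r + t - 1 := by
    obtain ⟨c, hc⟩ := hdvd
    by_cases hc0 : c = 0
    · subst hc0
      exact ⟨0, by rw [C_0, zero_mul]; linear_combination hc⟩
    · have hdb : (q + 1 - t).natDegree ≤ r.natDegree := by
        apply le_trans (natDegree_sub_le _ _)
        simp only [max_le_iff]
        constructor
        · apply le_trans (natDegree_add_le _ _)
          simp [hdeg]
        · omega
      rw [hc, natDegree_mul hrne hc0] at hdb
      have hcdeg : c.natDegree = 0 := by omega
      refine ⟨c.coeff 0, ?_⟩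
      have := eq_C_of_natDegree_eq_zero hcdeg
      rw [← this]
      linear_combination hc
  -- the master equation
  have hmaster : (D : ℚ[X]) * y^2
      = (4 * C c₀ - 1) * t^2 + (4 - 12 * C c₀) * t + (12 * C c₀ - 4) := by
    linear_combination hy + 4 * hq + 4 * (C c₀) * hrt
  by_cases hc4 : c₀ = 1/4
  · -- the good case: D y² = t - 1
    have hC : (4 : ℚ[X]) * C c₀ = 1 := by
      rw [hc4, show (4:ℚ[X]) = C (4:ℚ) from (map_ofNat C 4).symm, ← C_mul]
      norm_num
    have hDy : (D : ℚ[X]) * y ^ 2 = t - 1 := by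
      linear_combination hmaster + (t^2 - 3*t + 3) * hC
    have hyne : y ≠ 0 := by
      intro h0
      rw [h0] at hDy
      have ht : t = 1 := by linear_combination -hDy
      rw [ht] at ht1
      simp at ht1
    have hl : ((D : ℚ[X]) * y ^ 2).natDegree = 2 * y.natDegree := by
      rw [show ((D:ℕ) : ℚ[X]) = C ((D:ℕ) : ℚ) from (C_eq_natCast D).symm, natDegree_C_mul,
        natDegree_pow]
      positivity
    have hrr : (t - 1).natDegree = t.natDegree := by
      rw [← C_1, natDegree_sub_C]
    rw [hDy, hrr] at hl
    omega
  · exfalso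
    by_cases hc0 : c₀ = 0
    · -- q = t - 1, impossible for degree reasons
      subst hc0
      rw [C_0, zero_mul, zero_add] at hq
      have : q.natDegree = t.natDegree := by rw [hq, ← C_1, natDegree_sub_C]
      omega
    by_cases hc3 : c₀ = 1/3
    · -- 3 D y² = t², forcing D = 3
      have hC : (3 : ℚ[X]) * C c₀ = 1 := by
        rw [hc3, show (3:ℚ[X]) = C (3:ℚ) from (map_ofNat C 3).symm, ← C_mul]
        norm_num
      have h33 : (3 : ℚ[X]) * ((D : ℚ[X]) * y ^ 2) = t ^ 2 := by
        linear_combination 3 * hmaster + (4*t^2 - 12*t + 12) * hC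
      have hyne : y ≠ 0 := by
        intro h0
        rw [h0] at h33
        simp at h33
        exact htne (pow_eq_zero_iff (by norm_num) |>.mp h33.symm)
      have hlc := congrArg leadingCoeff h33
      rw [leadingCoeff_mul, leadingCoeff_mul, leadingCoeff_pow, leadingCoeff_pow] at hlc
      have hDl : ((D : ℚ[X])).leadingCoeff = (D : ℚ) := by
        rw [show ((D:ℕ) : ℚ[X]) = C ((D:ℕ) : ℚ) from (C_eq_natCast D).symm, leadingCoeff_C]
      have h3l : ((3 : ℚ[X])).leadingCoeff = (3 : ℚ) := by
        rw [show (3:ℚ[X]) = C (3:ℚ) from (map_ofNat C 3).symm, leadingCoeff_C]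
      rw [hDl, h3l] at hlc
      have hyl : y.leadingCoeff ≠ 0 := leadingCoeff_ne_zero.mpr hyne
      have hsq : IsSquare ((3 * D : ℕ) : ℚ) := by
        refine ⟨t.leadingCoeff / y.leadingCoeff, ?_⟩
        push_cast
        field_simp
        linear_combination hlc
      rw [Rat.isSquare_natCast_iff] at hsq
      obtain ⟨m, hm⟩ := hsq
      have h3m : 3 ∣ m := by
        have h3p : (3:ℕ).Prime := by norm_num
        have h3mm : 3 ∣ m * m := ⟨D, by omega⟩
        exact (Nat.Prime.dvd_mul h3p).mp h3mm |>.elim id id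
      obtain ⟨k, hk⟩ := h3m
      have hDk : D = 3 * (k * k) := by rw [hk] at hm; linarith
      have hku : IsUnit k := hD k ⟨3, by omega⟩
      rw [Nat.isUnit_iff] at hku
      rw [hku] at hDk
      omega
    · exact no_middle_case D t y ht1 c₀ hc0 hc3 hc4 hmaster
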